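/- For each r > 0, the function K_r(k) := k − 1/(2·(r·h(r²k) + h(k))²) is strictly increasing on [0, k_max), is negative at k = 0, and has a positive limit as k → k_max⁻, where k_max = min{1, 1/r²}; hence K_r has a unique zero κ(r) in (0, k_max). -/
import Mathlib

open Set Filter Topology

lemma tendsto_h_left (h : ℝ → ℝ) (hc : ContinuousOn h (Set.Ico (0:ℝ) 1))
    (hlim : Filter.Tendsto h (nhdsWithin (1:ℝ) (Set.Iio 1)) (nhds 1))
    (a : ℝ) (ha0 : 0 < a) (ha1 : a ≤ 1) :
    Filter.Tendsto h (nhdsWithin a (Set.Iio a)) (nhds (if a < 1 then h a else 1)) := by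
  rcases lt_or_eq_of_le ha1 with hlt | heq
  · rw [if_pos hlt]
    have hcw : ContinuousWithinAt h (Set.Ico (0:ℝ) 1) a := hc a ⟨le_of_lt ha0, hlt⟩
    have hle : nhdsWithin a (Set.Iio a) ≤ nhdsWithin a (Set.Ico (0:ℝ) 1) := by
      rw [nhdsWithin_le_iff]
      have h1 : Set.Ioi (0:ℝ) ∈ nhdsWithin a (Set.Iio a) :=
        nhdsWithin_le_nhds (Ioi_mem_nhds ha0)
      have h2 : Set.Iio a ∈ nhdsWithin a (Set.Iio a) := self_mem_nhdsWithin
      filter_upwards [h1, h2] with x hx1 hx2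
      exact ⟨le_of_lt hx1, lt_of_lt_of_le hx2 ha1⟩
    exact hcw.mono_left hle
  · rw [if_neg (by simp [heq]), heq]
    exact hlim

theorem K_r_unique_zero (h h' : ℝ → ℝ)
    (hc : ContinuousOn h (Set.Ico (0:ℝ) 1))
    (hmono : StrictMonoOn h (Set.Ico (0:ℝ) 1))
    (h0 : h 0 = 3/4)
    (hpos : ∀ k ∈ Set.Ico (0:ℝ) 1, 0 < h k)
    (hlim : Filter.Tendsto h (nhdsWithin (1:ℝ) (Set.Iio 1)) (nhds 1))
    (hderiv : ∀ k ∈ Set.Ico (0:ℝ) 1, HasDerivAt h (h' k) k)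
    (hderivc : ContinuousOn h' (Set.Ico (0:ℝ) 1))
    (hderivpos : ∀ k ∈ Set.Ico (0:ℝ) 1, 0 < h' k)
    (r : ℝ) (hr : 0 < r) :
    StrictMonoOn (fun k : ℝ => k - 1 / (2 * (r * h (r ^ 2 * k) + h k) ^ 2))
        (Set.Ico (0:ℝ) (min 1 (1 / r ^ 2))) ∧
    (0:ℝ) - 1 / (2 * (r * h (r ^ 2 * 0) + h 0) ^ 2) < 0 ∧
    (∃ L > (0:ℝ), Filter.Tendsto (fun k : ℝ => k - 1 / (2 * (r * h (r ^ 2 * k) + h k) ^ 2))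
        (nhdsWithin (min 1 (1 / r ^ 2)) (Set.Iio (min 1 (1 / r ^ 2)))) (nhds L)) ∧
    ∃! κ : ℝ, κ ∈ Set.Ioo (0:ℝ) (min 1 (1 / r ^ 2)) ∧
      κ - 1 / (2 * (r * h (r ^ 2 * κ) + h κ) ^ 2) = 0 := by
  have hr2 : (0:ℝ) < r ^ 2 := by positivity
  set km := min 1 (1 / r ^ 2) with hkmdef
  set K : ℝ → ℝ := fun k => k - 1 / (2 * (r * h (r ^ 2 * k) + h k) ^ 2) with hKdef
  have hkm_pos : 0 < km := lt_min one_pos (by positivity)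
  have hkm_le1 : km ≤ 1 := min_le_left _ _
  have hkm_le2 : km ≤ 1 / r ^ 2 := min_le_right _ _
  have hmem1 : ∀ k ∈ Set.Ico (0:ℝ) km, k ∈ Set.Ico (0:ℝ) 1 := fun k hk =>
    ⟨hk.1, lt_of_lt_of_le hk.2 hkm_le1⟩
  have hmem2 : ∀ k ∈ Set.Ico (0:ℝ) km, r ^ 2 * k ∈ Set.Ico (0:ℝ) 1 := by
    intro k hk
    refine ⟨mul_nonneg (le_of_lt hr2) hk.1, ?_⟩
    have h1 : k < 1 / r ^ 2 := lt_of_lt_of_le hk.2 hkm_le2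
    rw [lt_div_iff₀ hr2] at h1
    nlinarith
  have hgpos : ∀ k ∈ Set.Ico (0:ℝ) km, 0 < r * h (r ^ 2 * k) + h k := fun k hk =>
    add_pos (mul_pos hr (hpos _ (hmem2 k hk))) (hpos _ (hmem1 k hk))
  -- 1. strict mono
  have hKmono : StrictMonoOn K (Set.Ico (0:ℝ) km) := by
    intro x hx y hy hxy
    have gx := hgpos x hx
    have gy := hgpos y hy
    have h1 : h (r ^ 2 * x) < h (r ^ 2 * y) :=
      hmono (hmem2 x hx) (hmem2 y hy) (by nlinarith)
    have h2 : h x < h y := hmono (hmem1 x hx) (hmem1 y hy) hxy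
    have hglt : r * h (r ^ 2 * x) + h x < r * h (r ^ 2 * y) + h y := by nlinarith
    have hsq : (r * h (r ^ 2 * x) + h x) ^ 2 < (r * h (r ^ 2 * y) + h y) ^ 2 :=
      pow_lt_pow_left₀ hglt (le_of_lt gx) two_ne_zero
    have hinv : 1 / (2 * (r * h (r ^ 2 * y) + h y) ^ 2)
        < 1 / (2 * (r * h (r ^ 2 * x) + h x) ^ 2) :=
      one_div_lt_one_div_of_lt (by positivity) (by linarith)
    show x - _ < y - _
    linarith
  -- 2. K 0 < 0
  have hK0 : K 0 < 0 := by
    show (0:ℝ) - 1 / (2 * (r * h (r ^ 2 * 0) + h 0) ^ 2) < 0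
    rw [mul_zero, h0]
    have hp : (0:ℝ) < 1 / (2 * (r * (3/4) + 3/4) ^ 2) := by positivity
    linarith
  -- 3. the limit
  have ha1_pos : 0 < r ^ 2 * km := mul_pos hr2 hkm_pos
  have ha1_le : r ^ 2 * km ≤ 1 := by
    have h1 : r ^ 2 * km ≤ r ^ 2 * (1 / r ^ 2) := by nlinarith
    have h2 : r ^ 2 * (1 / r ^ 2) = 1 := by field_simp
    linarith
  set ℓ1 := if r ^ 2 * km < 1 then h (r ^ 2 * km) else 1 with hℓ1def
  set ℓ2 := if km < 1 then h km else 1 with hℓ2def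
  have hℓ1pos : 0 < ℓ1 := by
    rw [hℓ1def]; split_ifs with hc1
    · exact hpos _ ⟨le_of_lt ha1_pos, hc1⟩
    · exact one_pos
  have hℓ2pos : 0 < ℓ2 := by
    rw [hℓ2def]; split_ifs with hc1
    · exact hpos _ ⟨le_of_lt hkm_pos, hc1⟩
    · exact one_pos
  have hGpos : 0 < r * ℓ1 + ℓ2 := add_pos (mul_pos hr hℓ1pos) hℓ2pos
  have hLpos : 0 < km - 1 / (2 * (r * ℓ1 + ℓ2) ^ 2) := by
    rcases le_or_gt r 1 with hr1 | hr1
    · have hkm1 : km = 1 := min_eq_left (by rw [le_div_iff₀ hr2]; nlinarith)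
      have hℓ2eq : ℓ2 = 1 := by rw [hℓ2def, hkm1]; simp
      have hG1 : (1:ℝ) ≤ r * ℓ1 + ℓ2 := by
        rw [hℓ2eq]; nlinarith
      have h2G : (1:ℝ) < 2 * (r * ℓ1 + ℓ2) ^ 2 := by nlinarith
      have hfrac : 1 / (2 * (r * ℓ1 + ℓ2) ^ 2) < 1 := by
        rw [div_lt_one (by positivity)]; exact h2G
      rw [hkm1]; linarith
    · have hkm2 : km = 1 / r ^ 2 := min_eq_right (by rw [div_le_one hr2]; nlinarith)
      have ha1eq : r ^ 2 * km = 1 := by rw [hkm2]; field_simp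
      have hℓ1eq : ℓ1 = 1 := by rw [hℓ1def, ha1eq]; simp
      have hGr : r < r * ℓ1 + ℓ2 := by rw [hℓ1eq]; nlinarith
      have hsq : r ^ 2 < 2 * (r * ℓ1 + ℓ2) ^ 2 := by nlinarith
      have hfrac : 1 / (2 * (r * ℓ1 + ℓ2) ^ 2) < 1 / r ^ 2 :=
        one_div_lt_one_div_of_lt hr2 hsq
      rw [hkm2]; linarith
  have Tmul : Filter.Tendsto (fun k : ℝ => r ^ 2 * k) (nhdsWithin km (Set.Iio km))
      (nhdsWithin (r ^ 2 * km) (Set.Iio (r ^ 2 * km))) := by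
    rw [tendsto_nhdsWithin_iff]
    constructor
    · exact ((continuous_const.mul continuous_id).tendsto km).mono_left nhdsWithin_le_nhds
    · filter_upwards [self_mem_nhdsWithin] with x hx
      exact Set.mem_Iio.mpr (mul_lt_mul_of_pos_left hx hr2)
  have T1 : Filter.Tendsto (fun k : ℝ => h (r ^ 2 * k)) (nhdsWithin km (Set.Iio km))
      (nhds ℓ1) := (tendsto_h_left h hc hlim _ ha1_pos ha1_le).comp Tmul
  have T2 : Filter.Tendsto h (nhdsWithin km (Set.Iio km)) (nhds ℓ2) :=
    tendsto_h_left h hc hlim km hkm_pos hkm_le1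
  have TG : Filter.Tendsto (fun k : ℝ => r * h (r ^ 2 * k) + h k)
      (nhdsWithin km (Set.Iio km)) (nhds (r * ℓ1 + ℓ2)) := (T1.const_mul r).add T2
  have hGne : 2 * (r * ℓ1 + ℓ2) ^ 2 ≠ 0 := by positivity
  have Tinv : Filter.Tendsto (fun k : ℝ => 1 / (2 * (r * h (r ^ 2 * k) + h k) ^ 2))
      (nhdsWithin km (Set.Iio km)) (nhds (1 / (2 * (r * ℓ1 + ℓ2) ^ 2))) :=
    tendsto_const_nhds.div ((TG.pow 2).const_mul 2) hGne
  have Tid : Filter.Tendsto (fun k : ℝ => k) (nhdsWithin km (Set.Iio km)) (nhds km) :=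
    Filter.tendsto_id.mono_left nhdsWithin_le_nhds
  have TK : Filter.Tendsto K (nhdsWithin km (Set.Iio km))
      (nhds (km - 1 / (2 * (r * ℓ1 + ℓ2) ^ 2))) := Tid.sub Tinv
  -- 4. existence and uniqueness
  have hKcont : ContinuousOn K (Set.Ico (0:ℝ) km) := by
    apply ContinuousOn.sub continuousOn_id
    apply ContinuousOn.div continuousOn_const
    · exact continuousOn_const.mul (((continuousOn_const.mul
        (hc.comp ((continuous_const.mul continuous_id).continuousOn) hmem2)).add
        (hc.mono hmem1)).pow 2)
    · intro k hk
      have := hgpos k hk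
      positivity
  have hev1 : ∀ᶠ k in nhdsWithin km (Set.Iio km), 0 < K k :=
    TK.eventually (eventually_gt_nhds hLpos)
  have hev2 : ∀ᶠ k in nhdsWithin km (Set.Iio km), 0 < k :=
    Filter.Eventually.filter_mono nhdsWithin_le_nhds (eventually_gt_nhds hkm_pos)
  have hev3 : ∀ᶠ k in nhdsWithin km (Set.Iio km), k < km := by
    filter_upwards [self_mem_nhdsWithin] with x hx using hx
  obtain ⟨k0, hk0K, hk00, hk0km⟩ := (hev1.and (hev2.and hev3)).exists
  have hsub : Set.Icc (0:ℝ) k0 ⊆ Set.Ico 0 km := fun x hx =>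
    ⟨hx.1, lt_of_le_of_lt hx.2 hk0km⟩
  have hivt := intermediate_value_Ioo (le_of_lt hk00) (hKcont.mono hsub)
  obtain ⟨κ, hκmem, hκ0⟩ := hivt ⟨hK0, hk0K⟩
  have hκIoo : κ ∈ Set.Ioo (0:ℝ) km := ⟨hκmem.1, lt_trans hκmem.2 hk0km⟩
  refine ⟨hKmono, hK0, ⟨km - 1 / (2 * (r * ℓ1 + ℓ2) ^ 2), hLpos, TK⟩, κ, ⟨hκIoo, hκ0⟩, ?_⟩
  intro y hy
  have hyIco : y ∈ Set.Ico (0:ℝ) km := ⟨le_of_lt hy.1.1, hy.1.2⟩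
  have hκIco : κ ∈ Set.Ico (0:ℝ) km := ⟨le_of_lt hκIoo.1, hκIoo.2⟩
  exact hKmono.injOn hyIco hκIco (by rw [show K y = _ from rfl]; exact hy.2.trans hκ0.symm)
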